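/- Let A be a bialgebra over a commutative ring R, let k ≥ 1, and let x_1, …, x_{k+1} be primitive elements of A. Then Δ̄^k(x_1 ⋯ x_{k+1}) = Σ_{σ ∈ S_{k+1}} x_{σ(1)} ⊗ x_{σ(2)} ⊗ ⋯ ⊗ x_{σ(k+1)} in A^{⊗(k+1)}, where the sum is over all permutations σ of {1, …, k+1}. -/

import Mathlib

open scoped TensorProduct

universe u v

/-- The iterated tensor power carrier: `Tpow R A k` is `A^{⊗(k+1)}`, nested on the left,
so that `Tpow R A 0 = A` and `Tpow R A (k+1) = Tpow R A k ⊗[R] A`. -/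
noncomputable def Tpow (R : Type u) [CommRing R] (A : Type v) [AddCommGroup A] [Module R A] :
    ℕ → ModuleCat.{v} R
  | 0 => ModuleCat.of R A
  | n + 1 => ModuleCat.of R ((Tpow R A n) ⊗[R] A)

/-- The pure tensor `x 0 ⊗ x 1 ⊗ ⋯ ⊗ x k` (nested on the left) in `Tpow R A k`. -/
noncomputable def tensorOfFn (R : Type u) [CommRing R] (A : Type v)
    [AddCommGroup A] [Module R A] : (k : ℕ) → (Fin (k + 1) → A) → Tpow R A k
  | 0, x => x 0
  | k + 1, x => (tensorOfFn R A k fun i => x i.castSucc) ⊗ₜ[R] x (Fin.last (k + 1))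

/-- The reduced comultiplication `Δ̄ = Δ - (· ⊗ 1) - (1 ⊗ ·)` as an `R`-linear map. -/
noncomputable def reducedComulHom (R : Type u) (A : Type v)
    [CommRing R] [Ring A] [Bialgebra R A] : A →ₗ[R] A ⊗[R] A :=
  Coalgebra.comul - ((TensorProduct.mk R A A).flip 1) - (TensorProduct.mk R A A 1)

/-- The iterated reduced comultiplication `Δ̄^k : A → A^{⊗(k+1)}`, with `Δ̄^0 = id`,
`Δ̄^1 = Δ̄` and `Δ̄^k = (Δ̄^{k-1} ⊗ id) ∘ Δ̄`. -/
noncomputable def iterRedComul (R : Type u) (A : Type v) [CommRing R] [Ring A] [Bialgebra R A] :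
    (k : ℕ) → A →ₗ[R] Tpow R A k
  | 0 => LinearMap.id
  | k + 1 =>
      (TensorProduct.map (iterRedComul R A k) (LinearMap.id (R := R) (M := A))).comp
        (reducedComulHom R A)

/-- An element of a bialgebra is primitive if `Δ(x) = x ⊗ 1 + 1 ⊗ x`. -/
def IsPrimitiveElem (R : Type u) {A : Type v} [CommRing R] [Ring A] [Bialgebra R A]
    (x : A) : Prop :=
  Coalgebra.comul (R := R) x = x ⊗ₜ[R] (1 : A) + (1 : A) ⊗ₜ[R] x


section Splits

variable {α : Type*} {M : Type*} [AddCommMonoid M]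

/-- All ways to split a list into two subsequences (order preserved). -/
def splits : List α → List (List α × List α)
  | [] => [([], [])]
  | a :: l => ((splits l).map fun p => (a :: p.1, p.2))
      ++ ((splits l).map fun p => (p.1, a :: p.2))

theorem splits_length {l : List α} : ∀ p ∈ splits l, p.1.length + p.2.length = l.length := by
  induction l with
  | nil => intro p hp; simp [splits] at hp; simp [hp]
  | cons a l ih =>
    intro p hp
    simp only [splits, List.mem_append, List.mem_map] at hp
    rcases hp with ⟨q, hq, rfl⟩ | ⟨q, hq, rfl⟩ <;>
      · have := ih q hq; simp at this ⊢; omega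

theorem splits_sublist {l : List α} : ∀ p ∈ splits l, p.1.Sublist l ∧ p.2.Sublist l := by
  induction l with
  | nil => intro p hp; simp [splits] at hp; simp [hp]
  | cons a l ih =>
    intro p hp
    simp only [splits, List.mem_append, List.mem_map] at hp
    rcases hp with ⟨q, hq, rfl⟩ | ⟨q, hq, rfl⟩
    · exact ⟨(ih q hq).1.cons₂ a, (ih q hq).2.cons a⟩
    · exact ⟨(ih q hq).1.cons a, (ih q hq).2.cons₂ a⟩

theorem splits_sum_right_nil :
    ∀ (l : List α) (f : List α × List α → M),
      ((splits l).map fun p => if p.2.length = 0 then f p else 0).sum = f (l, [])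
  | [], f => by simp [splits]
  | a :: l, f => by
    simp only [splits, List.map_append, List.sum_append, List.map_map, Function.comp_def]
    rw [splits_sum_right_nil l (fun q => f (a :: q.1, q.2))]
    simp

theorem splits_sum_left_nil :
    ∀ (l : List α) (f : List α × List α → M),
      ((splits l).map fun p => if p.1.length = 0 then f p else 0).sum = f ([], l)
  | [], f => by simp [splits]
  | a :: l, f => by
    simp only [splits, List.map_append, List.sum_append, List.map_map, Function.comp_def]
    rw [splits_sum_left_nil l (fun q => f (q.1, a :: q.2))]
    simp

theorem splits_sum_right_singleton (d : α) :
    ∀ (l : List α) (f : List α × List α → M),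
      ((splits l).map fun p => if p.2.length = 1 then f p else 0).sum
        = ∑ j ∈ Finset.range l.length, f (l.eraseIdx j, [l.getD j d])
  | [], f => by simp [splits]
  | a :: l, f => by
    simp only [splits, List.map_append, List.sum_append, List.map_map, Function.comp_def]
    rw [splits_sum_right_singleton d l (fun q => f (a :: q.1, q.2))]
    have h2 : ((splits l).map fun q : List α × List α =>
        if (a :: q.2).length = 1 then f (q.1, a :: q.2) else 0).sum = f (l, [a]) := by
      have he : (fun q : List α × List α =>
          if (a :: q.2).length = 1 then f (q.1, a :: q.2) else 0)
          = fun q : List α × List α =>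
          if q.2.length = 0 then (fun p : List α × List α => f (p.1, a :: p.2)) q else 0 := by
        funext q
        exact if_congr (by rw [List.length_cons]; omega) rfl rfl
      rw [he, splits_sum_right_nil l]
    rw [h2]
    rw [List.length_cons, Finset.sum_range_succ']
    simp

end Splits

section OfFn

variable {α : Type*}

theorem eraseIdx_ofFn (n : ℕ) (x : Fin (n + 1) → α) (j : Fin (n + 1)) :
    (List.ofFn x).eraseIdx (j : ℕ) = List.ofFn (x ∘ j.succAbove) := by
  induction n with
  | zero =>
    have : j = 0 := Subsingleton.elim (α := Fin 1) j 0
    subst this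
    simp [List.ofFn_succ]
  | succ n ih =>
    cases j using Fin.cases with
    | zero => simp [List.ofFn_succ, Fin.succAbove_zero, Function.comp_def]
    | succ i =>
      rw [List.ofFn_succ]
      show (x 0 :: List.ofFn fun m => x m.succ).eraseIdx (i.val + 1) = _
      rw [List.eraseIdx_cons_succ, ih (fun m => x m.succ) i]
      rw [List.ofFn_succ]
      simp [Function.comp_def, Fin.succ_succAbove_succ, Fin.succ_succAbove_zero]

theorem getD_ofFn (n : ℕ) (x : Fin (n + 1) → α) (j : Fin (n + 1)) (d : α) :
    (List.ofFn x).getD (j : ℕ) d = x j := by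
  rw [List.getD_eq_getElem _ d (by simp; omega), List.getElem_ofFn]

end OfFn


section Bialg

variable {R : Type u} {A : Type v} [CommRing R] [Ring A] [Bialgebra R A]

theorem reducedComulHom_apply (a : A) :
    reducedComulHom R A a = Coalgebra.comul a - a ⊗ₜ[R] (1 : A) - (1 : A) ⊗ₜ[R] a := by
  simp [reducedComulHom]

theorem comul_list_prod : ∀ (l : List A), (∀ a ∈ l, IsPrimitiveElem R a) →
    Coalgebra.comul (R := R) l.prod
      = ((splits l).map fun p : List A × List A => p.1.prod ⊗ₜ[R] p.2.prod).sum
  | [], _ => by simp [splits, Algebra.TensorProduct.one_def]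
  | a :: l, h => by
    have ha : Coalgebra.comul (R := R) a = a ⊗ₜ[R] (1 : A) + (1 : A) ⊗ₜ[R] a :=
      h a (List.mem_cons_self (a := a) (l := l))
    have ih := comul_list_prod l (fun b hb => h b (List.mem_cons_of_mem a hb))
    rw [List.prod_cons, Bialgebra.comul_mul, ha, ih, add_mul,
      ← List.sum_map_mul_left, ← List.sum_map_mul_left]
    simp only [splits, List.map_append, List.sum_append, List.map_map, Function.comp_def]
    congr 1
    · apply congrArg
      apply List.map_congr_left
      intro p _
      simp [Algebra.TensorProduct.tmul_mul_tmul]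
    · apply congrArg
      apply List.map_congr_left
      intro p _
      simp [Algebra.TensorProduct.tmul_mul_tmul]

theorem reducedComulHom_list_prod (l : List A) (hl : l ≠ [])
    (h : ∀ a ∈ l, IsPrimitiveElem R a) :
    reducedComulHom R A l.prod
      = ((splits l).map fun p : List A × List A =>
          if p.1.length ≠ 0 ∧ p.2.length ≠ 0 then p.1.prod ⊗ₜ[R] p.2.prod else 0).sum := by
  have key : ((splits l).map fun p : List A × List A => p.1.prod ⊗ₜ[R] p.2.prod).sum
      = ((splits l).map fun p : List A × List A =>
          (if p.2.length = 0 then p.1.prod ⊗ₜ[R] p.2.prod else 0)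
          + ((if p.1.length = 0 then p.1.prod ⊗ₜ[R] p.2.prod else 0)
          + (if p.1.length ≠ 0 ∧ p.2.length ≠ 0 then p.1.prod ⊗ₜ[R] p.2.prod else 0))).sum := by
    apply congrArg
    apply List.map_congr_left
    intro p hp
    have hlen := splits_length p hp
    have hne : ¬(p.1.length = 0 ∧ p.2.length = 0) := by
      rintro ⟨h1, h2⟩
      apply hl
      have : l.length = 0 := by omega
      exact List.length_eq_zero_iff.mp this
    by_cases h1 : p.1.length = 0 <;> by_cases h2 : p.2.length = 0 <;>
      simp [h1, h2] <;> tauto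
  rw [reducedComulHom_apply, comul_list_prod l h, key, List.sum_map_add, List.sum_map_add,
    splits_sum_right_nil l (fun p => p.1.prod ⊗ₜ[R] p.2.prod),
    splits_sum_left_nil l (fun p => p.1.prod ⊗ₜ[R] p.2.prod)]
  simp only [List.prod_nil]
  abel

end Bialg


section Bialg2

variable {R : Type u} {A : Type v} [CommRing R] [Ring A] [Bialgebra R A]

theorem iterRedComul_list_prod_eq_zero :
    ∀ (k : ℕ) (l : List A), l ≠ [] → l.length ≤ k →
      (∀ a ∈ l, IsPrimitiveElem R a) → iterRedComul R A k l.prod = 0 := by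
  intro k
  induction k with
  | zero =>
    intro l hl hlen _
    exact absurd (List.length_eq_zero_iff.mp (Nat.le_zero.mp hlen)) hl
  | succ k ih =>
    intro l hl hlen hprim
    have hdef : iterRedComul R A (k + 1) l.prod
        = TensorProduct.map (iterRedComul R A k) (LinearMap.id (R := R) (M := A))
          (reducedComulHom R A l.prod) := rfl
    rw [hdef, reducedComulHom_list_prod l hl hprim, map_list_sum, List.map_map]
    apply List.sum_eq_zero
    intro y hy
    obtain ⟨p, hp, rfl⟩ := List.mem_map.mp hy
    have hlfull := splits_length p hp
    have hsub := splits_sublist p hp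
    by_cases hc : p.1.length ≠ 0 ∧ p.2.length ≠ 0
    · have hz : iterRedComul R A k p.1.prod = 0 := by
        apply ih p.1
        · intro hnil; rw [hnil] at hc; simp at hc
        · omega
        · exact fun a ha => hprim a (hsub.1.subset ha)
      rw [Function.comp_apply, if_pos hc, TensorProduct.map_tmul, hz, TensorProduct.zero_tmul]; rfl
    · rw [Function.comp_apply, if_neg hc, map_zero]; rfl

def permCons {n : ℕ} (j : Fin (n + 1)) (σ : Equiv.Perm (Fin n)) : Equiv.Perm (Fin (n + 1)) :=
  (finSuccEquivLast.trans (Equiv.optionCongr σ)).trans (finSuccEquiv' j).symm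

theorem permCons_castSucc {n : ℕ} (j : Fin (n + 1)) (σ : Equiv.Perm (Fin n)) (i : Fin n) :
    permCons j σ i.castSucc = j.succAbove (σ i) := by
  simp [permCons, finSuccEquivLast_castSucc, finSuccEquiv'_symm_some]

theorem permCons_last {n : ℕ} (j : Fin (n + 1)) (σ : Equiv.Perm (Fin n)) :
    permCons j σ (Fin.last n) = j := by
  simp [permCons, finSuccEquivLast_last, finSuccEquiv'_symm_none]

theorem permCons_bijective {n : ℕ} :
    Function.Bijective (fun p : Fin (n + 1) × Equiv.Perm (Fin n) => permCons p.1 p.2) := by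
  rw [Fintype.bijective_iff_injective_and_card]
  constructor
  · rintro ⟨j, σ⟩ ⟨j', σ'⟩ h
    simp only at h
    have hj : j = j' := by rw [← permCons_last j σ, h, permCons_last]
    subst hj
    have hσ : σ = σ' := by
      ext i
      have h2 := congrArg (fun e : Equiv.Perm (Fin (n + 1)) => e i.castSucc) h
      simp only [permCons_castSucc] at h2
      exact congrArg Fin.val (Fin.succAbove_right_injective (p := j) h2)
    rw [hσ]
  · simp [Fintype.card_perm, Nat.factorial_succ]

theorem iterRedComul_ofFn_prod :
    ∀ (k : ℕ) (x : Fin (k + 1) → A), (∀ i, IsPrimitiveElem R (x i)) →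
    iterRedComul R A k (List.ofFn x).prod
      = ∑ σ : Equiv.Perm (Fin (k + 1)), tensorOfFn R A k (fun i => x (σ i)) := by
  intro k
  induction k with
  | zero =>
    intro x hx
    have h1 : (List.ofFn x).prod = x 0 := by simp [List.ofFn_succ]
    have h2 : ∀ σ : Equiv.Perm (Fin 1), tensorOfFn R A 0 (fun i => x (σ i)) = x 0 := by
      intro σ
      show x (σ 0) = x 0
      congr 1
      exact Subsingleton.elim (α := Fin 1) _ _
    rw [h1]
    show x 0 = ∑ σ : Equiv.Perm (Fin 1), x (σ 0)
    rw [Finset.sum_eq_single (1 : Equiv.Perm (Fin 1))]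
    · rfl
    · intro b _ hb
      exact absurd (Equiv.ext fun i => Subsingleton.elim (α := Fin 1) _ _) hb
    · simp
  | succ k ih =>
    intro x hx
    have hl : (List.ofFn x) ≠ [] := by simp [List.ofFn_succ]
    have hprim : ∀ a ∈ List.ofFn x, IsPrimitiveElem R a := by
      intro a hamem
      rw [List.mem_ofFn] at hamem
      obtain ⟨i, rfl⟩ := hamem
      exact hx i
    have hdef : iterRedComul R A (k + 1) (List.ofFn x).prod
        = TensorProduct.map (iterRedComul R A k) (LinearMap.id (R := R) (M := A))
          (reducedComulHom R A (List.ofFn x).prod) := rfl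
    rw [hdef, reducedComulHom_list_prod _ hl hprim, map_list_sum, List.map_map]
    have step1 : List.map ((TensorProduct.map (iterRedComul R A k)
          (LinearMap.id (R := R) (M := A))) ∘ fun p : List A × List A =>
          if p.1.length ≠ 0 ∧ p.2.length ≠ 0 then p.1.prod ⊗ₜ[R] p.2.prod else 0)
          (splits (List.ofFn x))
        = List.map (fun p : List A × List A =>
            if p.2.length = 1 then (iterRedComul R A k p.1.prod) ⊗ₜ[R] p.2.prod else 0)
          (splits (List.ofFn x)) := by
      apply List.map_congr_left
      intro p hp
      have hlen := splits_length p hp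
      rw [List.length_ofFn] at hlen
      have hsub := splits_sublist p hp
      by_cases h2 : p.2.length = 1
      · have hc : p.1.length ≠ 0 ∧ p.2.length ≠ 0 := by omega
        rw [Function.comp_apply, if_pos hc, if_pos h2, TensorProduct.map_tmul]
        rfl
      · by_cases hc : p.1.length ≠ 0 ∧ p.2.length ≠ 0
        · rw [Function.comp_apply, if_pos hc, if_neg h2, TensorProduct.map_tmul,
            iterRedComul_list_prod_eq_zero k p.1
              (by intro hnil; rw [hnil] at hc; simp at hc) (by omega)
              (fun a ha => hprim a (hsub.1.subset ha)), TensorProduct.zero_tmul]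
        · rw [Function.comp_apply, if_neg hc, if_neg h2, map_zero]
    rw [step1]
    have step2 : (List.map (fun p : List A × List A =>
          if p.2.length = 1 then (iterRedComul R A k p.1.prod) ⊗ₜ[R] p.2.prod else 0)
          (splits (List.ofFn x))).sum
        = ∑ j ∈ Finset.range (List.ofFn x).length,
            (iterRedComul R A k (((List.ofFn x).eraseIdx j).prod))
              ⊗ₜ[R] ([(List.ofFn x).getD j 1]).prod :=
      splits_sum_right_singleton (1 : A) (List.ofFn x) _
    rw [step2, List.length_ofFn,
      ← Fin.sum_univ_eq_sum_range (fun j : ℕ =>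
          (iterRedComul R A k (((List.ofFn x).eraseIdx j).prod))
            ⊗ₜ[R] ([(List.ofFn x).getD j 1]).prod) (k + 2)]
    have step3 : ∀ j : Fin (k + 2),
        (iterRedComul R A k (((List.ofFn x).eraseIdx (j : ℕ)).prod))
            ⊗ₜ[R] ([(List.ofFn x).getD (j : ℕ) 1]).prod
        = ∑ σ : Equiv.Perm (Fin (k + 1)),
            tensorOfFn R A k (fun i => x (j.succAbove (σ i))) ⊗ₜ[R] x j := by
      intro j
      rw [eraseIdx_ofFn (k + 1) x j, getD_ofFn (k + 1) x j 1, List.prod_singleton,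
        ih (x ∘ j.succAbove) (fun i => hx _), TensorProduct.sum_tmul]
      rfl
    rw [Finset.sum_congr rfl (fun j _ => step3 j)]
    have key := Fintype.sum_bijective
      (fun p : Fin (k + 2) × Equiv.Perm (Fin (k + 1)) => permCons p.1 p.2)
      permCons_bijective
      (fun p : Fin (k + 2) × Equiv.Perm (Fin (k + 1)) =>
        tensorOfFn R A k (fun i => x (p.1.succAbove (p.2 i))) ⊗ₜ[R] x p.1)
      (fun τ : Equiv.Perm (Fin (k + 2)) => tensorOfFn R A (k + 1) (fun i => x (τ i)))
      (by
        rintro ⟨j, σ⟩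
        dsimp only
        have hfun : (fun i : Fin (k + 1) => x ((permCons j σ) i.castSucc))
            = fun i => x (j.succAbove (σ i)) := by
          funext i; rw [permCons_castSucc]
        have hexp : tensorOfFn R A (k + 1) (fun i => x (permCons j σ i))
            = (tensorOfFn R A k fun i => x (permCons j σ i.castSucc))
                ⊗ₜ[R] x (permCons j σ (Fin.last (k + 1))) := rfl
        rw [hexp, permCons_last, hfun])
    exact (Fintype.sum_prod_type _).symm.trans key

end Bialg2

/-- For primitive elements `x₁, …, x_{k+1}` of a bialgebra `A`,
`Δ̄^k(x₁ ⋯ x_{k+1}) = Σ_{σ ∈ S_{k+1}} x_{σ(1)} ⊗ ⋯ ⊗ x_{σ(k+1)}`. -/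
theorem stmt4 {R : Type u} {A : Type v} [CommRing R] [Ring A] [Bialgebra R A]
    (k : ℕ) (hk : 1 ≤ k) (x : Fin (k + 1) → A) (hx : ∀ i, IsPrimitiveElem R (x i)) :
    iterRedComul R A k (List.ofFn x).prod =
      ∑ σ : Equiv.Perm (Fin (k + 1)), tensorOfFn R A k (fun i => x (σ i)) := by
  exact iterRedComul_ofFn_prod k x hx
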